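/- Let G be a group with maps B₁, B₂: G → G, and define the descendent operation a ∘ b = B₁(a)·b·B₂(a). Then (G, B₁, B₂) is a Rota-Baxter system if and only if ∘ is associative and B₁ is a semigroup homomorphism from (G, ∘) to (G, ·). -/
import Mathlib


theorem stmt_3 {G : Type*} [Group G] (B₁ B₂ : G → G)
    (circ : G → G → G) (hcirc : ∀ a b, circ a b = B₁ a * b * B₂ a) :
    ((∀ a b : G, B₁ a * B₁ b = B₁ (circ a b)) ∧
     (∀ a b : G, B₂ b * B₂ a = B₂ (circ a b))) ↔
    ((∀ a b c : G, circ (circ a b) c = circ a (circ b c)) ∧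
     (∀ a b : G, B₁ (circ a b) = B₁ a * B₁ b)) := by
  constructor
  · rintro ⟨h1, h2⟩
    refine ⟨fun a b c => ?_, fun a b => (h1 a b).symm⟩
    rw [hcirc (circ a b) c, hcirc a (circ b c), ← h1, ← h2, hcirc b c]
    group
  · rintro ⟨hassoc, h1⟩
    refine ⟨fun a b => (h1 a b).symm, fun a b => ?_⟩
    have key := hassoc a b 1
    rw [hcirc (circ a b) 1, hcirc a (circ b 1), hcirc b 1, h1] at key
    simp only [mul_one, mul_assoc] at key
    exact (mul_left_cancel (mul_left_cancel key)).symm
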